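/- Let τ_AE = [0]⊗(q̄ψ₀/2 + qψ₁/2) + [1]⊗(qψ₀/2 + q̄ψ₁/2) where ψ₀ = |ψ₀⟩⟨ψ₀|, ψ₁ = |ψ₁⟩⟨ψ₁| are pure states with real overlap ⟨ψ₀|ψ₁⟩ = F ∈ [0,1], q ∈ [0,1], q̄ = 1-q. Then the conditional entropy H(A|E)_τ = S(τ_AE) - S(τ_E) equals 1 + φ(√((q̄-q)² + 4qq̄F²)) - φ(F). -/

import Mathlib

open Matrix

open Polynomial in
lemma aux_prod_eig {m : Type*} [Fintype m] [DecidableEq m] {M : Matrix m m ℂ}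
    (hM : M.IsHermitian) (x : ℂ) :
    ∏ i, (x - (hM.eigenvalues i : ℂ)) = det (x • (1 : Matrix m m ℂ) - M) := by
  set U : Matrix m m ℂ := (hM.eigenvectorUnitary : Matrix m m ℂ) with hU
  have h1 : U * star U = 1 := (Matrix.mem_unitaryGroup_iff).mp hM.eigenvectorUnitary.2
  have key : x • (1 : Matrix m m ℂ) - M
      = U * (x • (1 : Matrix m m ℂ) - diagonal (RCLike.ofReal ∘ hM.eigenvalues)) * star U := by
    rw [Matrix.mul_sub, Matrix.sub_mul, Matrix.mul_smul, Matrix.smul_mul, mul_one, h1]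
    exact congrArg (x • 1 - ·) hM.spectral_theorem
  rw [key, det_mul, det_mul, mul_comm (det U), mul_assoc, ← det_mul, h1, det_one, mul_one]
  rw [smul_one_eq_diagonal, diagonal_sub, det_diagonal]
  rfl

lemma aux_det_rank {m r : Type*} [Fintype m] [DecidableEq m] [Fintype r] [DecidableEq r]
    (U : Matrix m r ℂ) (V : Matrix r m ℂ) {x : ℂ} (hx : x ≠ 0) :
    det (x • (1 : Matrix m m ℂ) - U * V)
      = x ^ (Fintype.card m) * det ((1 : Matrix r r ℂ) - x⁻¹ • (V * U)) := by
  have key : x • (1 : Matrix m m ℂ) - U * V = x • ((1 : Matrix m m ℂ) + ((-x⁻¹) • U) * V) := by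
    rw [Matrix.smul_mul, smul_add, smul_smul, mul_neg, mul_inv_cancel₀ hx]
    simp [sub_eq_add_neg]
  rw [key, det_smul, det_one_add_mul_comm, Matrix.mul_smul]
  congr 2
  simp [sub_eq_add_neg]

lemma aux_det_block {d : ℕ} (ψ0 ψ1 : Fin d → ℂ) (F p r : ℝ)
    (hn0 : ∑ k : Fin d, Complex.normSq (ψ0 k) = 1)
    (hn1 : ∑ k : Fin d, Complex.normSq (ψ1 k) = 1)
    (hov : ∑ k : Fin d, (starRingEnd ℂ) (ψ0 k) * ψ1 k = (F : ℂ))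
    (M : Matrix (Fin d) (Fin d) ℂ)
    (hM : ∀ k k', M k k' = (p : ℂ) * (ψ0 k * (starRingEnd ℂ) (ψ0 k'))
        + (r : ℂ) * (ψ1 k * (starRingEnd ℂ) (ψ1 k')))
    {x : ℂ} (hx : x ≠ 0) :
    x ^ 2 * det (x • (1 : Matrix (Fin d) (Fin d) ℂ) - M)
      = x ^ d * (x ^ 2 - ((p : ℂ) + (r : ℂ)) * x + (p : ℂ) * (r : ℂ) * (1 - (F : ℂ) ^ 2)) := by
  have S00 : ∑ k : Fin d, (starRingEnd ℂ) (ψ0 k) * ψ0 k = 1 := by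
    have : ∀ k, (starRingEnd ℂ) (ψ0 k) * ψ0 k = (Complex.normSq (ψ0 k) : ℂ) := by
      intro k; rw [Complex.normSq_eq_conj_mul_self]
    simp only [this]
    rw [← Complex.ofReal_sum, hn0, Complex.ofReal_one]
  have S11 : ∑ k : Fin d, (starRingEnd ℂ) (ψ1 k) * ψ1 k = 1 := by
    have : ∀ k, (starRingEnd ℂ) (ψ1 k) * ψ1 k = (Complex.normSq (ψ1 k) : ℂ) := by
      intro k; rw [Complex.normSq_eq_conj_mul_self]
    simp only [this]
    rw [← Complex.ofReal_sum, hn1, Complex.ofReal_one]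
  have S10 : ∑ k : Fin d, (starRingEnd ℂ) (ψ1 k) * ψ0 k = (F : ℂ) := by
    have := congrArg (starRingEnd ℂ) hov
    simpa [map_sum, mul_comm] using this
  set U : Matrix (Fin d) (Fin 2) ℂ :=
    fun k j => if j = 0 then (p : ℂ) * ψ0 k else (r : ℂ) * ψ1 k with hU
  set V : Matrix (Fin 2) (Fin d) ℂ :=
    fun j k => if j = 0 then (starRingEnd ℂ) (ψ0 k) else (starRingEnd ℂ) (ψ1 k) with hV
  have hUV : U * V = M := by
    ext k k'
    rw [mul_apply, Fin.sum_univ_two, hM]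
    simp [hU, hV]
    ring
  have hVU : V * U = Matrix.of ![![(p : ℂ), (r : ℂ) * F], ![(p : ℂ) * F, (r : ℂ)]] := by
    ext j j'
    fin_cases j <;> fin_cases j' <;>
      simp only [mul_apply, hU, hV, Matrix.of_apply, Matrix.cons_val', Matrix.cons_val_zero,
        Matrix.cons_val_one, Matrix.head_cons, Matrix.empty_val', Matrix.cons_val_fin_one,
        Matrix.head_fin_const, if_true, if_false, Fin.isValue, reduceIte]
    · calc ∑ k, (starRingEnd ℂ) (ψ0 k) * ((p : ℂ) * ψ0 k)
          = (p : ℂ) * ∑ k, (starRingEnd ℂ) (ψ0 k) * ψ0 k := by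
            rw [Finset.mul_sum]; exact Finset.sum_congr rfl fun _ _ => by ring
        _ = (p : ℂ) := by rw [S00, mul_one]
    · calc ∑ k, (starRingEnd ℂ) (ψ0 k) * ((r : ℂ) * ψ1 k)
          = (r : ℂ) * ∑ k, (starRingEnd ℂ) (ψ0 k) * ψ1 k := by
            rw [Finset.mul_sum]; exact Finset.sum_congr rfl fun _ _ => by ring
        _ = (r : ℂ) * F := by rw [hov]
    · calc ∑ k, (starRingEnd ℂ) (ψ1 k) * ((p : ℂ) * ψ0 k)
          = (p : ℂ) * ∑ k, (starRingEnd ℂ) (ψ1 k) * ψ0 k := by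
            rw [Finset.mul_sum]; exact Finset.sum_congr rfl fun _ _ => by ring
        _ = (p : ℂ) * F := by rw [S10]
    · calc ∑ k, (starRingEnd ℂ) (ψ1 k) * ((r : ℂ) * ψ1 k)
          = (r : ℂ) * ∑ k, (starRingEnd ℂ) (ψ1 k) * ψ1 k := by
            rw [Finset.mul_sum]; exact Finset.sum_congr rfl fun _ _ => by ring
        _ = (r : ℂ) := by rw [S11, mul_one]
  rw [← hUV, aux_det_rank U V hx, hVU]
  rw [det_fin_two]
  simp only [Matrix.sub_apply, Matrix.smul_apply, Matrix.one_apply, Matrix.of_apply,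
    Matrix.cons_val', Matrix.cons_val_zero, Matrix.cons_val_one, Matrix.head_cons,
    Matrix.empty_val', Matrix.cons_val_fin_one, Matrix.head_fin_const, if_true,
    Fin.isValue, reduceIte, smul_eq_mul, Fintype.card_fin]
  field_simp
  simp only [(by decide : ¬((0:Fin 2) = 1)), (by decide : ¬((1:Fin 2) = 0)), if_false]
  ring

def auxEquiv (d : ℕ) : (Fin d ⊕ Fin d) ≃ (Fin 2 × Fin d) where
  toFun := Sum.elim (fun k => (0, k)) (fun k => (1, k))
  invFun := fun p => if p.1 = 0 then Sum.inl p.2 else Sum.inr p.2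
  left_inv := by rintro (k | k) <;> simp
  right_inv := by rintro ⟨a, k⟩; fin_cases a <;> simp

lemma aux_det_split {d : ℕ} (τ : Matrix (Fin 2 × Fin d) (Fin 2 × Fin d) ℂ)
    (hoff : ∀ (a a' : Fin 2) (k k' : Fin d), a ≠ a' → τ (a, k) (a', k') = 0) (x : ℂ) :
    det (x • (1 : Matrix (Fin 2 × Fin d) (Fin 2 × Fin d) ℂ) - τ)
      = det (x • (1 : Matrix (Fin d) (Fin d) ℂ) - Matrix.of (fun k k' => τ (0, k) (0, k')))
        * det (x • (1 : Matrix (Fin d) (Fin d) ℂ) - Matrix.of (fun k k' => τ (1, k) (1, k'))) := by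
  rw [← det_submatrix_equiv_self (auxEquiv d)]
  have : (x • (1 : Matrix (Fin 2 × Fin d) (Fin 2 × Fin d) ℂ) - τ).submatrix (auxEquiv d) (auxEquiv d)
      = Matrix.fromBlocks
          (x • (1 : Matrix (Fin d) (Fin d) ℂ) - Matrix.of (fun k k' => τ (0, k) (0, k'))) 0 0
          (x • (1 : Matrix (Fin d) (Fin d) ℂ) - Matrix.of (fun k k' => τ (1, k) (1, k'))) := by
    ext i j
    rcases i with k | k <;> rcases j with k' | k' <;>
      simp [auxEquiv, Matrix.one_apply, Prod.ext_iff, hoff, Fin.zero_ne_one,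
        (by decide : (1 : Fin 2) ≠ 0)]
  rw [this, det_fromBlocks_zero₂₁]

open Polynomial in
lemma aux_eval_msetprod (s : Multiset ℂ) (x : ℂ) :
    ((s.map fun z => X - C z).prod).eval x = (s.map fun z => x - z).prod := by
  rw [Polynomial.eval_multiset_prod, Multiset.map_map]
  congr 1
  apply Multiset.map_congr rfl
  intro z _
  simp

open Polynomial in
lemma aux_mset_eq (s t : Multiset ℂ)
    (h : ∀ x : ℂ, (s.map fun z => x - z).prod = (t.map fun z => x - z).prod) : s = t := by
  have hp : (s.map fun z => X - C z).prod = (t.map fun z => X - C z).prod := by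
    apply Polynomial.funext
    intro x
    rw [aux_eval_msetprod, aux_eval_msetprod]
    exact h x
  have := congrArg Polynomial.roots hp
  rwa [Polynomial.roots_multiset_prod_X_sub_C, Polynomial.roots_multiset_prod_X_sub_C] at this

lemma aux_neg_log_div (t c : ℝ) (hc : c ≠ 0) :
    -(t/c * Real.logb 2 (t/c)) = -(t/c * Real.logb 2 t) + t/c * Real.logb 2 c := by
  rcases eq_or_ne t 0 with ht | ht
  · simp [ht]
  · rw [Real.logb_div ht hc]
    ring

noncomputable def phi (x : ℝ) : ℝ :=
  1 - (1/2) * (1 + x) * Real.logb 2 (1 + x) - (1/2) * (1 - x) * Real.logb 2 (1 - x)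

/-- von Neumann entropy (in bits) of a Hermitian matrix, via its eigenvalues. -/
noncomputable def vNEntropy {n : Type*} [Fintype n] [DecidableEq n]
    {M : Matrix n n ℂ} (hM : M.IsHermitian) : ℝ :=
  -∑ i, hM.eigenvalues i * Real.logb 2 (hM.eigenvalues i)

theorem stmt_16 {d : ℕ} (ψ0 ψ1 : Fin d → ℂ) (q F : ℝ)
    (hq : q ∈ Set.Icc (0:ℝ) 1) (hF : F ∈ Set.Icc (0:ℝ) 1)
    (hn0 : ∑ k : Fin d, Complex.normSq (ψ0 k) = 1)
    (hn1 : ∑ k : Fin d, Complex.normSq (ψ1 k) = 1)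
    (hov : ∑ k : Fin d, (starRingEnd ℂ) (ψ0 k) * ψ1 k = (F : ℂ))
    (τ : Matrix (Fin 2 × Fin d) (Fin 2 × Fin d) ℂ)
    (hτdef : ∀ (a a' : Fin 2) (k k' : Fin d),
      τ (a, k) (a', k') =
        if a = a' then
          (if a = 0 then
            (((1 - q)/2 : ℝ) : ℂ) * (ψ0 k * (starRingEnd ℂ) (ψ0 k'))
              + ((q/2 : ℝ) : ℂ) * (ψ1 k * (starRingEnd ℂ) (ψ1 k'))
          else
            ((q/2 : ℝ) : ℂ) * (ψ0 k * (starRingEnd ℂ) (ψ0 k'))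
              + (((1 - q)/2 : ℝ) : ℂ) * (ψ1 k * (starRingEnd ℂ) (ψ1 k')))
        else 0)
    (τE : Matrix (Fin d) (Fin d) ℂ)
    (hτEdef : ∀ k k', τE k k' = τ (0, k) (0, k') + τ (1, k) (1, k'))
    (hτ : τ.IsHermitian) (hτE : τE.IsHermitian) :
    vNEntropy hτ - vNEntropy hτE =
      1 + phi (Real.sqrt (((1 - q) - q)^2 + 4 * q * (1 - q) * F^2)) - phi F := by
  have hd : 0 < d := by
    rcases Nat.eq_zero_or_pos d with h | h
    · subst h; simp at hn0
    · exact h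
  set D : ℝ := Real.sqrt (((1 - q) - q)^2 + 4 * q * (1 - q) * F^2) with hD
  have hrad : (0:ℝ) ≤ ((1 - q) - q)^2 + 4 * q * (1 - q) * F^2 := by
    have h1 : 0 ≤ 4 * q * (1 - q) * F^2 :=
      mul_nonneg (mul_nonneg (mul_nonneg (by norm_num : (0:ℝ) ≤ 4) hq.1)
        (by linarith [hq.2])) (sq_nonneg F)
    nlinarith [sq_nonneg ((1 - q) - q)]
  have hD2 : D^2 = ((1 - q) - q)^2 + 4 * q * (1 - q) * F^2 := Real.sq_sqrt hrad
  set a : ℝ := (1 + D)/4 with ha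
  set b : ℝ := (1 - D)/4 with hb
  set α : ℝ := (1 + F)/2 with hα
  set β : ℝ := (1 - F)/2 with hβ
  have hsum : a + b = 1/2 := by rw [ha, hb]; ring
  have hprod : a * b = ((1 - q)/2) * (q/2) * (1 - F^2) := by
    rw [ha, hb]
    linear_combination (-(1:ℝ)/16) * hD2
  have hαsum : α + β = 1 := by rw [hα, hβ]; ring
  have hαprod : α * β = ((1:ℝ)/2) * ((1:ℝ)/2) * (1 - F^2) := by rw [hα, hβ]; ring
  -- complex quadratic factorizations
  have hQ : ∀ x : ℂ, x ^ 2 - ((((1 - q)/2 : ℝ) : ℂ) + ((q/2 : ℝ) : ℂ)) * x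
      + (((1 - q)/2 : ℝ) : ℂ) * ((q/2 : ℝ) : ℂ) * (1 - (F : ℂ)^2)
      = (x - (a : ℂ)) * (x - (b : ℂ)) := by
    intro x
    have h1 := congrArg (fun t : ℝ => (t : ℂ)) hsum
    have h2 := congrArg (fun t : ℝ => (t : ℂ)) hprod
    push_cast at h1 h2
    push_cast
    linear_combination x * h1 - h2
  have hQ' : ∀ x : ℂ, x ^ 2 - (((q/2 : ℝ) : ℂ) + (((1 - q)/2 : ℝ) : ℂ)) * x
      + ((q/2 : ℝ) : ℂ) * (((1 - q)/2 : ℝ) : ℂ) * (1 - (F : ℂ)^2)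
      = (x - (a : ℂ)) * (x - (b : ℂ)) := by
    intro x
    have h1 := congrArg (fun t : ℝ => (t : ℂ)) hsum
    have h2 := congrArg (fun t : ℝ => (t : ℂ)) hprod
    push_cast at h1 h2
    push_cast
    linear_combination x * h1 - h2
  have hQE : ∀ x : ℂ, x ^ 2 - ((((1:ℝ)/2 : ℝ) : ℂ) + (((1:ℝ)/2 : ℝ) : ℂ)) * x
      + (((1:ℝ)/2 : ℝ) : ℂ) * (((1:ℝ)/2 : ℝ) : ℂ) * (1 - (F : ℂ)^2)
      = (x - (α : ℂ)) * (x - (β : ℂ)) := by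
    intro x
    have h1 := congrArg (fun t : ℝ => (t : ℂ)) hαsum
    have h2 := congrArg (fun t : ℝ => (t : ℂ)) hαprod
    push_cast at h1 h2
    push_cast
    linear_combination x * h1 - h2
  -- block shapes
  have hM0 : ∀ k k', (Matrix.of (fun k k' => τ (0, k) (0, k')) : Matrix (Fin d) (Fin d) ℂ) k k'
      = (((1 - q)/2 : ℝ) : ℂ) * (ψ0 k * (starRingEnd ℂ) (ψ0 k'))
        + ((q/2 : ℝ) : ℂ) * (ψ1 k * (starRingEnd ℂ) (ψ1 k')) := by
    intro k k'; simp [hτdef]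
  have hM1 : ∀ k k', (Matrix.of (fun k k' => τ (1, k) (1, k')) : Matrix (Fin d) (Fin d) ℂ) k k'
      = ((q/2 : ℝ) : ℂ) * (ψ0 k * (starRingEnd ℂ) (ψ0 k'))
        + (((1 - q)/2 : ℝ) : ℂ) * (ψ1 k * (starRingEnd ℂ) (ψ1 k')) := by
    intro k k'
    simp [hτdef, (by decide : (1 : Fin 2) ≠ 0)]
  have hME : ∀ k k', τE k k'
      = (((1:ℝ)/2 : ℝ) : ℂ) * (ψ0 k * (starRingEnd ℂ) (ψ0 k'))
        + (((1:ℝ)/2 : ℝ) : ℂ) * (ψ1 k * (starRingEnd ℂ) (ψ1 k')) := by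
    intro k k'
    rw [hτEdef, hτdef, hτdef]
    simp [(by decide : (1 : Fin 2) ≠ 0)]
    push_cast
    ring
  have hoff : ∀ (a a' : Fin 2) (k k' : Fin d), a ≠ a' → τ (a, k) (a', k') = 0 := by
    intro a a' k k' h
    rw [hτdef]
    simp [h]
  -- det identities
  have hdetτ : ∀ x : ℂ, x ≠ 0 →
      x ^ 4 * det (x • (1 : Matrix (Fin 2 × Fin d) (Fin 2 × Fin d) ℂ) - τ)
        = x ^ (2*d) * ((x - (a : ℂ)) * (x - (b : ℂ)))^2 := by
    intro x hx
    rw [aux_det_split τ hoff x]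
    have h0 := aux_det_block ψ0 ψ1 F ((1 - q)/2) (q/2) hn0 hn1 hov _ hM0 hx
    have h1 := aux_det_block ψ0 ψ1 F (q/2) ((1 - q)/2) hn0 hn1 hov _ hM1 hx
    calc x ^ 4 * (det (x • 1 - Matrix.of fun k k' => τ (0, k) (0, k'))
            * det (x • 1 - Matrix.of fun k k' => τ (1, k) (1, k')))
        = (x ^ 2 * det (x • 1 - Matrix.of fun k k' => τ (0, k) (0, k')))
            * (x ^ 2 * det (x • 1 - Matrix.of fun k k' => τ (1, k) (1, k'))) := by ring
      _ = (x ^ d * ((x - (a : ℂ)) * (x - (b : ℂ)))) * (x ^ d * ((x - (a : ℂ)) * (x - (b : ℂ)))) := by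
          rw [h0, h1, hQ x, hQ' x]
      _ = x ^ (2*d) * ((x - (a : ℂ)) * (x - (b : ℂ)))^2 := by ring
  have hdetE : ∀ x : ℂ, x ≠ 0 →
      x ^ 2 * det (x • (1 : Matrix (Fin d) (Fin d) ℂ) - τE)
        = x ^ d * ((x - (α : ℂ)) * (x - (β : ℂ))) := by
    intro x hx
    have h0 := aux_det_block ψ0 ψ1 F ((1:ℝ)/2) ((1:ℝ)/2) hn0 hn1 hov τE hME hx
    rw [h0, hQE x]
  -- multiset identities
  set sτ : Multiset ℂ := Finset.univ.val.map (fun i => ((hτ.eigenvalues i : ℝ) : ℂ)) with hsτ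
  set sE : Multiset ℂ := Finset.univ.val.map (fun i => ((hτE.eigenvalues i : ℝ) : ℂ)) with hsE
  have hprodτ : ∀ x : ℂ, (sτ.map fun z => x - z).prod = det (x • 1 - τ) := by
    intro x
    rw [hsτ, Multiset.map_map, ← aux_prod_eig hτ x, Finset.prod_eq_multiset_prod]
    rfl
  have hprodE : ∀ x : ℂ, (sE.map fun z => x - z).prod = det (x • 1 - τE) := by
    intro x
    rw [hsE, Multiset.map_map, ← aux_prod_eig hτE x, Finset.prod_eq_multiset_prod]
    rfl
  have Eτ : Multiset.replicate 4 (0:ℂ) + sτ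
      = Multiset.replicate (2*d) (0:ℂ) + ((a:ℂ) ::ₘ (a:ℂ) ::ₘ (b:ℂ) ::ₘ {(b:ℂ)}) := by
    apply aux_mset_eq
    intro x
    rw [Multiset.map_add, Multiset.prod_add, Multiset.map_add, Multiset.prod_add,
      Multiset.map_replicate, Multiset.prod_replicate, Multiset.map_replicate,
      Multiset.prod_replicate, sub_zero, hprodτ]
    rcases eq_or_ne x 0 with hx | hx
    · subst hx
      rw [zero_pow (by norm_num), zero_pow (by omega), zero_mul, zero_mul]
    · rw [hdetτ x hx]
      simp only [Multiset.map_cons, Multiset.prod_cons, Multiset.map_singleton,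
        Multiset.prod_singleton]
      ring
  have EE : Multiset.replicate 2 (0:ℂ) + sE
      = Multiset.replicate d (0:ℂ) + ((α:ℂ) ::ₘ {(β:ℂ)}) := by
    apply aux_mset_eq
    intro x
    rw [Multiset.map_add, Multiset.prod_add, Multiset.map_add, Multiset.prod_add,
      Multiset.map_replicate, Multiset.prod_replicate, Multiset.map_replicate,
      Multiset.prod_replicate, sub_zero, hprodE]
    rcases eq_or_ne x 0 with hx | hx
    · subst hx
      rw [zero_pow (by norm_num), zero_pow (by omega), zero_mul, zero_mul]
    · rw [hdetE x hx]
      simp only [Multiset.map_cons, Multiset.prod_cons, Multiset.map_singleton,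
        Multiset.prod_singleton]
  -- sums of entropies
  have hSτ : vNEntropy hτ = 2 * (-(a * Real.logb 2 a)) + 2 * (-(b * Real.logb 2 b)) := by
    have h := congrArg (fun s : Multiset ℂ =>
      (s.map fun z => -(z.re * Real.logb 2 z.re)).sum) Eτ
    simp only [Multiset.map_add, Multiset.sum_add, Multiset.map_replicate,
      Multiset.sum_replicate, Multiset.map_cons, Multiset.sum_cons, Multiset.map_singleton,
      Multiset.sum_singleton, Complex.zero_re, Real.logb_zero, mul_zero, zero_mul, neg_zero,
      smul_zero, zero_add, Complex.ofReal_re] at h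
    have h2 : ((sτ.map fun z => -(z.re * Real.logb 2 z.re)).sum)
        = ∑ i, -(hτ.eigenvalues i * Real.logb 2 (hτ.eigenvalues i)) := by
      rw [hsτ, Multiset.map_map, Finset.sum_eq_multiset_sum]
      rfl
    rw [h2] at h
    rw [vNEntropy, ← Finset.sum_neg_distrib, h]
    ring
  have hSE : vNEntropy hτE = -(α * Real.logb 2 α) + -(β * Real.logb 2 β) := by
    have h := congrArg (fun s : Multiset ℂ =>
      (s.map fun z => -(z.re * Real.logb 2 z.re)).sum) EE
    simp only [Multiset.map_add, Multiset.sum_add, Multiset.map_replicate,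
      Multiset.sum_replicate, Multiset.map_cons, Multiset.sum_cons, Multiset.map_singleton,
      Multiset.sum_singleton, Complex.zero_re, Real.logb_zero, mul_zero, zero_mul, neg_zero,
      smul_zero, zero_add, Complex.ofReal_re] at h
    have h2 : ((sE.map fun z => -(z.re * Real.logb 2 z.re)).sum)
        = ∑ i, -(hτE.eigenvalues i * Real.logb 2 (hτE.eigenvalues i)) := by
      rw [hsE, Multiset.map_map, Finset.sum_eq_multiset_sum]
      rfl
    rw [h2] at h
    rw [vNEntropy, ← Finset.sum_neg_distrib, h]
  -- final arithmetic
  have hlog2 : Real.log 2 ≠ 0 := ne_of_gt (Real.log_pos one_lt_two)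
  have hl2 : Real.logb 2 2 = 1 := by rw [Real.logb, div_self hlog2]
  have hl4 : Real.logb 2 4 = 2 := by
    rw [show (4:ℝ) = 2^(2:ℕ) by norm_num, Real.logb, Real.log_pow]
    field_simp
    norm_num
  have e1 := aux_neg_log_div (1 + D) 4 (by norm_num)
  have e2 := aux_neg_log_div (1 - D) 4 (by norm_num)
  have e3 := aux_neg_log_div (1 + F) 2 (by norm_num)
  have e4 := aux_neg_log_div (1 - F) 2 (by norm_num)
  rw [hSτ, hSE, ha, hb, hα, hβ, e1, e2, e3, e4, hl2, hl4, phi, phi]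
  ring
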